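/- Let α ∈ (0,1). Then lim_{ε→0+} ε^{-(1+α)/2} · Σ_{N=1}^{∞} N^{-1-α} · F(N,ε) = 2^{(1+α)/2} · ∫₀^∞ y^{-1-α} tanh(y) dy, where the integral on the right-hand side is finite. -/

import Mathlib

open Filter Real MeasureTheory Set

/-- `F N ε = 1 - E[e^{-ε τ^N}]`, where `τ^N` is the hitting time of `0` by a
simple symmetric random walk on `{0,…,N}` started at `1` and reflected at `N`;
here `s = e^{-ε}` and `χ = (1 + √(1-s²))/s`. -/
noncomputable def combF (N : ℕ) (ε : ℝ) : ℝ :=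
  let s : ℝ := Real.exp (-ε)
  let χ : ℝ := (1 + Real.sqrt (1 - s ^ 2)) / s
  ((χ - 1) * χ ^ (2*N - 2) * (χ - s) + (1 - χ) * (s * χ - 1)) /
    (χ ^ (2*N - 1) * (χ - s) + (s * χ - 1))

lemma my_hasDerivAt_tanh (x : ℝ) : HasDerivAt Real.tanh (1 - Real.tanh x ^ 2) x := by
  have h : HasDerivAt (fun y => Real.sinh y / Real.cosh y)
      ((Real.cosh x * Real.cosh x - Real.sinh x * Real.sinh x) / Real.cosh x ^ 2) x :=
    (Real.hasDerivAt_sinh x).div (Real.hasDerivAt_cosh x) (ne_of_gt (Real.cosh_pos x))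
  have heq : (Real.cosh x * Real.cosh x - Real.sinh x * Real.sinh x) / Real.cosh x ^ 2
      = 1 - Real.tanh x ^ 2 := by
    rw [Real.tanh_eq_sinh_div_cosh, div_pow]
    field_simp
  have h2 : HasDerivAt Real.tanh ((Real.cosh x * Real.cosh x - Real.sinh x * Real.sinh x) / Real.cosh x ^ 2) x := by
    refine h.congr_of_eventuallyEq (Eventually.of_forall fun y => ?_)
    exact Real.tanh_eq_sinh_div_cosh y
  rwa [heq] at h2

lemma my_continuous_tanh : Continuous Real.tanh := by
  have : Continuous (fun y => Real.sinh y / Real.cosh y) :=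
    Real.continuous_sinh.div Real.continuous_cosh fun x => (Real.cosh_pos x).ne'
  exact this.congr fun y => (Real.tanh_eq_sinh_div_cosh y).symm

lemma my_tanh_nonneg {x : ℝ} (hx : 0 ≤ x) : 0 ≤ Real.tanh x := by
  rw [Real.tanh_eq_sinh_div_cosh]
  exact div_nonneg (Real.sinh_nonneg_iff.2 hx) (Real.cosh_pos x).le

lemma my_tanh_lt_one (x : ℝ) : Real.tanh x < 1 := by
  rw [Real.tanh_eq_sinh_div_cosh, div_lt_one (Real.cosh_pos x)]
  exact Real.sinh_lt_cosh x

lemma my_tanh_le_self {x : ℝ} (hx : 0 ≤ x) : Real.tanh x ≤ x := by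
  have key : MonotoneOn (fun y => y - Real.tanh y) (Ici 0) := by
    refine monotoneOn_of_deriv_nonneg (convex_Ici 0) ?_ ?_ ?_
    · exact (continuous_id.sub my_continuous_tanh).continuousOn
    · intro y _
      exact ((hasDerivAt_id' y).sub (my_hasDerivAt_tanh y)).differentiableAt.differentiableWithinAt
    · intro y hy
      rw [HasDerivAt.deriv (f := fun y => y - Real.tanh y) ((hasDerivAt_id' y).sub (my_hasDerivAt_tanh y))]
      nlinarith [my_tanh_nonneg (le_of_lt (mem_Ioi.1 (by rwa [interior_Ici] at hy))),
        my_tanh_lt_one y]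
  have h0 := key self_mem_Ici (mem_Ici.2 hx) hx
  simpa [Real.tanh_zero] using h0

lemma my_key {y : ℝ} (hy0 : 0 < y) : y * (1 - Real.tanh y ^ 2) ≤ Real.tanh y := by
  rw [Real.tanh_eq_sinh_div_cosh]
  have hc := Real.cosh_pos y
  have hs : y ≤ Real.sinh y := Real.self_le_sinh_iff.2 hy0.le
  have h1c : 1 ≤ Real.cosh y := Real.one_le_cosh y
  have hnum : 1 - (Real.sinh y / Real.cosh y) ^ 2 = 1 / Real.cosh y ^ 2 := by
    field_simp
    linarith [Real.cosh_sq_sub_sinh_sq y]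
  rw [hnum]
  rw [show y * (1 / Real.cosh y ^ 2) = y / Real.cosh y ^ 2 by ring,
    div_le_div_iff₀ (by positivity) hc]
  have hsn : 0 ≤ Real.sinh y := Real.sinh_nonneg_iff.2 hy0.le
  nlinarith [mul_le_mul_of_nonneg_right hs hc.le,
    mul_le_mul_of_nonneg_left h1c (mul_nonneg hsn hc.le)]

-- antitone of φ
lemma my_anti (α : ℝ) (hα : 0 < α) :
    AntitoneOn (fun y : ℝ => y ^ (-1 - α) * Real.tanh y) (Ioi 0) := by
  refine antitoneOn_of_deriv_nonpos (convex_Ioi 0) ?_ ?_ ?_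
  · refine ContinuousOn.mul ?_ my_continuous_tanh.continuousOn
    intro y hy
    exact (Real.continuousAt_rpow_const y _ (Or.inl (ne_of_gt hy))).continuousWithinAt
  · intro y hy
    rw [interior_Ioi] at hy
    have h1 : HasDerivAt (fun y : ℝ => y ^ (-1 - α)) ((-1-α) * y ^ (-1-α-1)) y :=
      Real.hasDerivAt_rpow_const (Or.inl (ne_of_gt hy))
    exact (h1.mul (my_hasDerivAt_tanh y)).differentiableAt.differentiableWithinAt
  · intro y hy
    rw [interior_Ioi] at hy
    have hy0 : (0:ℝ) < y := hy
    have h1 : HasDerivAt (fun y : ℝ => y ^ (-1 - α)) ((-1-α) * y ^ (-1-α-1)) y :=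
      Real.hasDerivAt_rpow_const (Or.inl (ne_of_gt hy0))
    rw [HasDerivAt.deriv (f := fun y => y ^ (-1 - α) * Real.tanh y) (h1.mul (my_hasDerivAt_tanh y))]
    have ht0 : 0 ≤ Real.tanh y := my_tanh_nonneg hy0.le
    have hkey := my_key hy0
    have hA : (0:ℝ) < y ^ (-1-α) := Real.rpow_pos_of_pos hy0 _
    have hrw : y ^ (-1-α-1) = y ^ (-1-α) / y := by
      rw [Real.rpow_sub hy0, Real.rpow_one]
    rw [hrw]
    have h2 : y * (1 - Real.tanh y ^ 2) ≤ (1+α) * Real.tanh y := by nlinarith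
    -- goal: (-1-α) * (A/y) * tanh + A * (1 - tanh^2) ≤ 0
    have h3 : y * ((-1-α) * (y ^ (-1-α) / y) * Real.tanh y + y ^ (-1-α) * (1 - Real.tanh y ^ 2))
        = y ^ (-1-α) * ((-1-α) * Real.tanh y + y * (1 - Real.tanh y ^ 2)) := by
      field_simp
    nlinarith [mul_pos hA hy0, mul_le_mul_of_nonneg_left h2 hA.le]

lemma my_meas (α : ℝ) : AEStronglyMeasurable (fun y : ℝ => y ^ (-1 - α) * Real.tanh y)
    (volume.restrict (Ioi (0:ℝ))) := by
  have : Measurable (fun y : ℝ => y ^ (-1 - α) * Real.tanh y) := by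
    exact (by measurability : Measurable (fun y : ℝ => y ^ (-1 - α))).mul
      my_continuous_tanh.measurable
  exact this.aestronglyMeasurable

lemma my_int (α : ℝ) (hα : α ∈ Set.Ioo (0:ℝ) 1) :
    IntegrableOn (fun y : ℝ => y ^ (-1 - α) * Real.tanh y) (Set.Ioi 0) volume := by
  obtain ⟨hα0, hα1⟩ := hα
  have h1 : IntegrableOn (fun y : ℝ => y ^ (-1 - α) * Real.tanh y) (Set.Ioc 0 1) volume := by
    have hb : IntegrableOn (fun y : ℝ => y ^ (-α)) (Set.Ioc (0:ℝ) 1) volume := by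
      have h := intervalIntegral.intervalIntegrable_rpow' (a := 0) (b := 1) (r := -α)
        (by linarith)
      rwa [intervalIntegrable_iff_integrableOn_Ioc_of_le zero_le_one] at h
    refine Integrable.mono hb ((my_meas α).mono_measure (Measure.restrict_mono Ioc_subset_Ioi_self le_rfl)) ?_
    filter_upwards [ae_restrict_mem measurableSet_Ioc] with y hy
    have hy0 : 0 < y := hy.1
    rw [Real.norm_eq_abs, Real.norm_eq_abs, abs_of_nonneg, abs_of_nonneg]
    · calc y ^ (-1 - α) * Real.tanh y ≤ y ^ (-1 - α) * y :=
          mul_le_mul_of_nonneg_left (my_tanh_le_self hy0.le) (Real.rpow_nonneg hy0.le _)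
        _ = y ^ (-α) := by
          rw [show (-α) = (-1-α) + 1 by ring, Real.rpow_add_one hy0.ne']
    · exact Real.rpow_nonneg hy0.le _
    · exact mul_nonneg (Real.rpow_nonneg hy0.le _) (my_tanh_nonneg hy0.le)
  have h2 : IntegrableOn (fun y : ℝ => y ^ (-1 - α) * Real.tanh y) (Set.Ioi 1) volume := by
    have hb : IntegrableOn (fun y : ℝ => y ^ (-1-α)) (Set.Ioi (1:ℝ)) volume :=
      integrableOn_Ioi_rpow_of_lt (by linarith) one_pos
    refine Integrable.mono hb ((my_meas α).mono_measure (Measure.restrict_mono (Ioi_subset_Ioi one_pos.le) le_rfl)) ?_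
    filter_upwards [ae_restrict_mem measurableSet_Ioi] with y hy
    have hy0 : (0:ℝ) < y := lt_trans one_pos hy
    rw [Real.norm_eq_abs, Real.norm_eq_abs, abs_of_nonneg (Real.rpow_nonneg hy0.le _),
      abs_of_nonneg (mul_nonneg (Real.rpow_nonneg hy0.le _) (my_tanh_nonneg hy0.le))]
    nlinarith [my_tanh_lt_one y, Real.rpow_nonneg hy0.le (-1-α), my_tanh_nonneg hy0.le]
  have : Set.Ioi (0:ℝ) = Set.Ioc 0 1 ∪ Set.Ioi 1 := (Set.Ioc_union_Ioi_eq_Ioi one_pos.le).symm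
  rw [this]
  exact h1.union h2

lemma my_union (a b : ℝ) (hb : 0 < b) :
    (⋃ N : ℕ, Ioc (a + (N:ℝ)*b) (a + ((N:ℝ)+1)*b)) = Ioi a := by
  ext y
  simp only [mem_iUnion, mem_Ioc, mem_Ioi]
  constructor
  · rintro ⟨N, h1, _⟩
    have : 0 ≤ (N:ℝ)*b := mul_nonneg (Nat.cast_nonneg N) hb.le
    linarith
  · intro hy
    have hx : 0 < (y - a)/b := div_pos (by linarith) hb
    set k : ℕ := ⌈(y - a)/b⌉₊ with hk
    have hk1 : 1 ≤ k := Nat.one_le_ceil_iff.2 hx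
    refine ⟨k - 1, ?_, ?_⟩
    · have h1 : ((k - 1 : ℕ) : ℝ) < (y - a)/b := by
        rw [← Nat.lt_ceil]
        omega
      have := (lt_div_iff₀ hb).1 h1
      nlinarith
    · have h2 : (y - a)/b ≤ ((k - 1 : ℕ) : ℝ) + 1 := by
        have := Nat.le_ceil ((y-a)/b)
        have hcast : ((k - 1 : ℕ) : ℝ) + 1 = (k : ℝ) := by
          have : (k - 1) + 1 = k := by omega
          rw [← this]
          push_cast
          ring
        rw [hcast]
        exact this
      have := (div_le_iff₀ hb).1 h2
      linarith

section Riemann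
variable {α : ℝ}

noncomputable def phi (α : ℝ) : ℝ → ℝ := fun y => y ^ (-1 - α) * Real.tanh y

lemma phi_nonneg (hy : 0 ≤ y) : 0 ≤ phi α y :=
  mul_nonneg (Real.rpow_nonneg hy _) (my_tanh_nonneg hy)

lemma phi_zero (hα : 0 < α) : phi α 0 = 0 := by
  simp [phi, Real.zero_rpow (by linarith : -1 - α ≠ 0)]

lemma my_summable_S (hα : α ∈ Set.Ioo (0:ℝ) 1) {b : ℝ} (hb : 0 < b) :
    Summable (fun N : ℕ => b * phi α ((N:ℝ) * b)) := by
  refine Summable.of_nonneg_of_le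
    (fun N => mul_nonneg hb.le (phi_nonneg (by positivity))) (fun N => ?_)
    (((Real.summable_nat_rpow (p := -1-α)).2 (by linarith [hα.1])).mul_left (b * b ^ (-1-α)))
  rcases Nat.eq_zero_or_pos N with h | h
  · simp [h, phi_zero hα.1]
    positivity
  · have hN : (0:ℝ) < N := by exact_mod_cast h
    have : phi α ((N:ℝ)*b) ≤ ((N:ℝ)*b) ^ (-1-α) := by
      have := my_tanh_lt_one ((N:ℝ)*b)
      have h0 : (0:ℝ) ≤ ((N:ℝ)*b) ^ (-1-α) := Real.rpow_nonneg (by positivity) _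
      calc phi α ((N:ℝ)*b) ≤ ((N:ℝ)*b) ^ (-1-α) * 1 :=
            mul_le_mul_of_nonneg_left (my_tanh_lt_one _).le h0
        _ = _ := mul_one _
    calc b * phi α ((N:ℝ)*b) ≤ b * ((N:ℝ)*b) ^ (-1-α) :=
          mul_le_mul_of_nonneg_left this hb.le
      _ = b * b ^ (-1-α) * (N:ℝ) ^ (-1-α) := by
          rw [Real.mul_rpow (by positivity) hb.le]; ring

lemma my_riemann (hα : α ∈ Set.Ioo (0:ℝ) 1) :
    Tendsto (fun b : ℝ => ∑' N : ℕ, b * phi α ((N:ℝ) * b)) (nhdsWithin 0 (Set.Ioi 0))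
      (nhds (∫ y in Set.Ioi (0:ℝ), phi α y)) := by
  obtain ⟨hα0, hα1⟩ := hα
  set I : ℝ := ∫ y in Set.Ioi (0:ℝ), phi α y with hI
  have hint : IntegrableOn (phi α) (Ioi 0) volume := my_int α ⟨hα0, hα1⟩
  have hanti := my_anti α hα0
  -- pieces
  have hpiece : ∀ (a b : ℝ), 0 ≤ a → 0 < b → ∀ N : ℕ,
      IntegrableOn (phi α) (Ioc (a + (N:ℝ)*b) (a + ((N:ℝ)+1)*b)) volume := by
    intro a b ha hb N
    refine hint.mono_set ?_
    intro y hy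
    have : 0 ≤ (N:ℝ)*b := by positivity
    exact mem_Ioi.2 (by have := hy.1; simp only [mem_Ioc] at *; linarith)
  -- hasSum decomposition
  have hdecomp : ∀ (a b : ℝ), 0 ≤ a → 0 < b →
      HasSum (fun N : ℕ => ∫ y in Ioc (a + (N:ℝ)*b) (a + ((N:ℝ)+1)*b), phi α y)
        (∫ y in Ioi a, phi α y) := by
    intro a b ha hb
    have hU := my_union a b hb
    have := MeasureTheory.hasSum_integral_iUnion
      (f := phi α) (s := fun N : ℕ => Ioc (a + (N:ℝ)*b) (a + ((N:ℝ)+1)*b))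
      (fun N => measurableSet_Ioc)
      (by
        have key : ∀ N M : ℕ, N < M → Disjoint (Ioc (a + (N:ℝ)*b) (a + ((N:ℝ)+1)*b))
            (Ioc (a + (M:ℝ)*b) (a + ((M:ℝ)+1)*b)) := by
          intro N M h
          refine Set.Ioc_disjoint_Ioc.2 ?_
          have h1 : ((N:ℝ)+1) ≤ (M:ℝ) := by exact_mod_cast h
          calc min (a + ((N:ℝ)+1)*b) (a + ((M:ℝ)+1)*b) ≤ a + ((N:ℝ)+1)*b := min_le_left _ _
            _ ≤ a + (M:ℝ)*b := by nlinarith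
            _ ≤ max (a + (N:ℝ)*b) (a + (M:ℝ)*b) := le_max_right _ _
        intro N M hNM
        rcases hNM.lt_or_gt with h | h
        · exact key N M h
        · exact (key M N h).symm)
      (by rw [hU]; exact hint.mono_set fun y hy => mem_Ioi.2 (lt_of_le_of_lt ha hy))
    rwa [hU] at this
  -- piecewise bounds
  have hub : ∀ b : ℝ, 0 < b → (∑' N : ℕ, b * phi α ((N:ℝ) * b)) ≤ I := by
    intro b hb
    have hsum := my_summable_S ⟨hα0, hα1⟩ hb
    have hshift : (∑' N : ℕ, b * phi α ((N:ℝ) * b))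
        = ∑' N : ℕ, b * phi α (((N:ℝ)+1) * b) := by
      rw [hsum.tsum_eq_zero_add]
      simp only [Nat.cast_zero, zero_mul, phi_zero hα0, mul_zero, zero_add]
      push_cast
      rfl
    rw [hshift]
    have hd := hdecomp 0 b le_rfl hb
    have hle : ∀ N : ℕ, b * phi α (((N:ℝ)+1) * b)
        ≤ ∫ y in Ioc (0 + (N:ℝ)*b) (0 + ((N:ℝ)+1)*b), phi α y := by
      intro N
      have hvol : (volume (Ioc (0 + (N:ℝ)*b) (0 + ((N:ℝ)+1)*b))).toReal = b := by
        rw [Real.volume_Ioc, ENNReal.toReal_ofReal (by nlinarith [Nat.cast_nonneg (α := ℝ) N])]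
        ring
      have hconst : ∫ _ in Ioc (0 + (N:ℝ)*b) (0 + ((N:ℝ)+1)*b), phi α (((N:ℝ)+1) * b)
          = b * phi α (((N:ℝ)+1) * b) := by
        rw [setIntegral_const, measureReal_def, hvol, smul_eq_mul]
      rw [← hconst]
      refine setIntegral_mono_on (integrableOn_const ?_) (hpiece 0 b le_rfl hb N)
        measurableSet_Ioc ?_
      · rw [Real.volume_Ioc]; exact ENNReal.ofReal_ne_top
      · intro y hy
        have hy0 : 0 < y := by
          have := hy.1; have : 0 + (N:ℝ)*b < y := hy.1
          nlinarith [Nat.cast_nonneg (α := ℝ) N]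
        refine hanti (mem_Ioi.2 hy0) (mem_Ioi.2 (by positivity)) ?_
        have := hy.2; linarith
    calc (∑' N : ℕ, b * phi α (((N:ℝ)+1) * b))
        ≤ ∑' N : ℕ, ∫ y in Ioc (0 + (N:ℝ)*b) (0 + ((N:ℝ)+1)*b), phi α y := by
          refine Summable.tsum_le_tsum hle ?_ hd.summable
          have := (summable_nat_add_iff 1).2 hsum
          refine this.congr fun N => ?_
          push_cast
          rfl
      _ = I := by rw [hd.tsum_eq]
  have hlb : ∀ b : ℝ, 0 < b → (∫ y in Ioi b, phi α y) ≤ ∑' N : ℕ, b * phi α ((N:ℝ) * b) := by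
    intro b hb
    have hsum := my_summable_S ⟨hα0, hα1⟩ hb
    have hshift : (∑' N : ℕ, b * phi α ((N:ℝ) * b))
        = ∑' N : ℕ, b * phi α (((N:ℝ)+1) * b) := by
      rw [hsum.tsum_eq_zero_add]
      simp only [Nat.cast_zero, zero_mul, phi_zero hα0, mul_zero, zero_add]
      push_cast
      rfl
    rw [hshift]
    have hd := hdecomp b b hb.le hb
    have hle : ∀ N : ℕ, (∫ y in Ioc (b + (N:ℝ)*b) (b + ((N:ℝ)+1)*b), phi α y)
        ≤ b * phi α (((N:ℝ)+1) * b) := by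
      intro N
      have hvol : (volume (Ioc (b + (N:ℝ)*b) (b + ((N:ℝ)+1)*b))).toReal = b := by
        rw [Real.volume_Ioc, ENNReal.toReal_ofReal (by nlinarith [Nat.cast_nonneg (α := ℝ) N])]
        ring
      have hconst : ∫ _ in Ioc (b + (N:ℝ)*b) (b + ((N:ℝ)+1)*b), phi α (((N:ℝ)+1) * b)
          = b * phi α (((N:ℝ)+1) * b) := by
        rw [setIntegral_const, measureReal_def, hvol, smul_eq_mul]
      rw [← hconst]
      refine setIntegral_mono_on (hpiece b b hb.le hb N) (integrableOn_const ?_)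
        measurableSet_Ioc ?_
      · rw [Real.volume_Ioc]; exact ENNReal.ofReal_ne_top
      · intro y hy
        have hNb : ((N:ℝ)+1) * b = b + (N:ℝ)*b := by ring
        refine hanti (mem_Ioi.2 (by rw [hNb]; positivity)) (mem_Ioi.2 ?_) ?_
        · have := hy.1; nlinarith [Nat.cast_nonneg (α := ℝ) N]
        · rw [hNb]; exact hy.1.le
    calc (∫ y in Ioi b, phi α y) = ∑' N : ℕ, ∫ y in Ioc (b + (N:ℝ)*b) (b + ((N:ℝ)+1)*b), phi α y :=
          hd.tsum_eq.symm
      _ ≤ ∑' N : ℕ, b * phi α (((N:ℝ)+1) * b) := by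
          refine Summable.tsum_le_tsum hle hd.summable ?_
          have := (summable_nat_add_iff 1).2 hsum
          refine this.congr fun N => ?_
          push_cast
          rfl
  -- tail integral bound
  have htail : ∀ b : ℝ, 0 < b → I - b ^ (1-α) / (1-α) ≤ ∫ y in Ioi b, phi α y := by
    intro b hb
    have hsplit : I = (∫ y in Ioc 0 b, phi α y) + ∫ y in Ioi b, phi α y := by
      rw [← setIntegral_union (Ioc_disjoint_Ioi le_rfl) measurableSet_Ioi
        (hint.mono_set Ioc_subset_Ioi_self) (hint.mono_set (Ioi_subset_Ioi hb.le)),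
        Ioc_union_Ioi_eq_Ioi hb.le]
    have hrint : IntegrableOn (fun y : ℝ => y ^ (-α)) (Ioc 0 b) volume := by
      have h := intervalIntegral.intervalIntegrable_rpow' (a := 0) (b := b) (r := -α)
        (by linarith)
      rwa [intervalIntegrable_iff_integrableOn_Ioc_of_le hb.le] at h
    have hbound : (∫ y in Ioc 0 b, phi α y) ≤ ∫ y in Ioc 0 b, y ^ (-α) := by
      refine setIntegral_mono_on (hint.mono_set Ioc_subset_Ioi_self) hrint measurableSet_Ioc ?_
      intro y hy
      have hy0 : 0 < y := hy.1
      calc phi α y ≤ y ^ (-1 - α) * y :=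
            mul_le_mul_of_nonneg_left (my_tanh_le_self hy0.le) (Real.rpow_nonneg hy0.le _)
        _ = y ^ (-α) := by
            rw [show (-α) = (-1-α) + 1 by ring, Real.rpow_add_one hy0.ne']
    have hval : (∫ y in Ioc 0 b, y ^ (-α)) = b ^ (1-α) / (1-α) := by
      rw [← intervalIntegral.integral_of_le hb.le]
      rw [integral_rpow (Or.inl (by linarith))]
      rw [Real.zero_rpow (by linarith : -α + 1 ≠ 0)]
      norm_num
      rw [show -α + 1 = 1 - α by ring]
    linarith [hbound, hval ▸ hbound]
  -- limit of lower envelope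
  have hLllim : Tendsto (fun b : ℝ => I - b ^ (1-α) / (1-α)) (nhdsWithin 0 (Ioi 0)) (nhds I) := by
    have h0 : Tendsto (fun b : ℝ => b ^ (1-α)) (nhdsWithin 0 (Ioi 0)) (nhds 0) := by
      have hc : ContinuousAt (fun x : ℝ => x ^ (1-α)) 0 :=
        Real.continuousAt_rpow_const 0 (1-α) (Or.inr (by linarith))
      have := hc.tendsto.mono_left (nhdsWithin_le_nhds (s := Ioi (0:ℝ)))
      rwa [Real.zero_rpow (by linarith : (1:ℝ)-α ≠ 0)] at this
    have := ((h0.div_const (1-α)).const_sub I)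
    simpa using this
  refine tendsto_of_tendsto_of_tendsto_of_le_of_le' hLllim tendsto_const_nhds ?_ ?_
  · filter_upwards [self_mem_nhdsWithin] with b hb
    exact le_trans (htail b hb) (hlb b hb)
  · filter_upwards [self_mem_nhdsWithin] with b hb
    exact hub b hb
end Riemann

noncomputable def chi (ε : ℝ) : ℝ :=
  (1 + Real.sqrt (1 - Real.exp (-ε) ^ 2)) / Real.exp (-ε)

lemma chi_facts {ε : ℝ} (hε : 0 < ε) :
    1 < chi ε ∧ Real.exp (-ε) * chi ε - 1 = Real.sqrt (1 - Real.exp (-ε) ^ 2) ∧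
      chi ε - Real.exp (-ε) = Real.sqrt (1 - Real.exp (-ε) ^ 2) * chi ε := by
  set s := Real.exp (-ε) with hs
  have hs0 : 0 < s := Real.exp_pos _
  have hs1 : s < 1 := Real.exp_lt_one_iff.2 (by linarith)
  have hsq : s ^ 2 < 1 := by nlinarith
  set u := Real.sqrt (1 - s ^ 2) with hu
  have hu0 : 0 < u := Real.sqrt_pos.2 (by linarith)
  have hu2 : u ^ 2 = 1 - s ^ 2 := Real.sq_sqrt (by linarith)
  have h1 : 1 < chi ε := by
    rw [chi, ← hs, ← hu, lt_div_iff₀ hs0]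
    linarith
  refine ⟨h1, ?_, ?_⟩
  · rw [chi, ← hs, ← hu]
    field_simp
    ring
  · rw [chi, ← hs, ← hu]
    field_simp
    nlinarith

lemma combF_eq {ε : ℝ} (hε : 0 < ε) {N : ℕ} (hN : 1 ≤ N) :
    combF N ε = (chi ε - 1) / chi ε * Real.tanh ((N : ℝ) * Real.log (chi ε))
      - (chi ε - 1) ^ 2 / chi ε * (1 / ((chi ε) ^ (2*N) + 1)) := by
  set s := Real.exp (-ε) with hs
  have hs0 : 0 < s := Real.exp_pos _
  have hs1 : s < 1 := Real.exp_lt_one_iff.2 (by linarith)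
  set u := Real.sqrt (1 - s ^ 2) with hu
  have hu0 : 0 < u := Real.sqrt_pos.2 (by nlinarith)
  obtain ⟨hχ1, hsχ, hχs⟩ := chi_facts hε
  set χ := chi ε with hχ
  have hχ0 : 0 < χ := lt_trans one_pos hχ1
  have hexp : Real.exp ((N : ℝ) * Real.log χ) = χ ^ N := by
    rw [Real.exp_nat_mul, Real.exp_log hχ0]
  have htanh : Real.tanh ((N : ℝ) * Real.log χ) = (χ ^ (2*N) - 1) / (χ ^ (2*N) + 1) := by
    rw [Real.tanh_eq_sinh_div_cosh, Real.sinh_eq, Real.cosh_eq, Real.exp_neg, hexp]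
    have hE : (0:ℝ) < χ ^ N := pow_pos hχ0 N
    have hE2 : χ ^ (2*N) = (χ ^ N) ^ 2 := by rw [← pow_mul, Nat.mul_comm]
    rw [hE2]
    have h2 : (0:ℝ) < (χ ^ N) ^ 2 + 1 := by positivity
    field_simp
  -- closed form
  have hpow : χ ^ (2*N) = χ * χ ^ (2*N - 1) := by
    rw [← pow_succ']
    congr 1
    omega
  have hpow2 : χ ^ (2*N - 1) = χ * χ ^ (2*N - 2) := by
    rw [← pow_succ']
    congr 1
    omega
  have hden0 : (0:ℝ) < χ ^ (2*N) + 1 := by positivity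
  have hcf : combF N ε = (χ - 1) * (χ ^ (2*N-1) - 1) / (χ ^ (2*N) + 1) := by
    rw [combF]
    rw [← hs, ← hu, show (1 + u)/s = χ by rw [hχ, chi, ← hs, ← hu]]
    rw [← hs] at hsχ hχs
    rw [← hu] at hsχ hχs
    rw [hχs, show s * χ - 1 = u from hsχ]
    rw [show (χ - 1) * χ ^ (2*N-2) * (u * χ) + (1 - χ) * u
        = u * ((χ - 1) * (χ ^ (2*N-1) - 1)) by rw [hpow2]; ring,
      show χ ^ (2*N-1) * (u * χ) + u = u * (χ ^ (2*N) + 1) by rw [hpow]; ring]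
    rw [mul_div_mul_left _ _ (ne_of_gt hu0)]
  rw [hcf, htanh, hpow]
  have hX : (0:ℝ) < χ ^ (2*N - 1) := pow_pos hχ0 _
  set X := χ ^ (2*N-1) with hXdef
  have hD : χ * X + 1 ≠ 0 := by positivity
  field_simp
  ring

lemma exp_slope : Tendsto (fun t : ℝ => (Real.exp t - 1) / t) (nhdsWithin 0 {(0:ℝ)}ᶜ) (nhds 1) := by
  have h := (Real.hasDerivAt_exp 0)
  rw [hasDerivAt_iff_tendsto_slope] at h
  simp only [Real.exp_zero] at h
  refine h.congr fun y => ?_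
  rw [slope_def_field]
  rw [Real.exp_zero, sub_zero]

lemma one_sub_exp_lim (c : ℝ) (hc : c ≠ 0) :
    Tendsto (fun ε : ℝ => (1 - Real.exp (-(c*ε))) / ε) (nhdsWithin 0 (Set.Ioi 0)) (nhds c) := by
  have hmap : Tendsto (fun ε : ℝ => -(c*ε)) (nhdsWithin 0 (Set.Ioi 0)) (nhdsWithin 0 {(0:ℝ)}ᶜ) := by
    rw [tendsto_nhdsWithin_iff]
    constructor
    · have : Tendsto (fun ε : ℝ => -(c*ε)) (nhds 0) (nhds (-(c*0))) :=
        (continuous_const.mul continuous_id).neg.tendsto 0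
      simpa using this.mono_left nhdsWithin_le_nhds
    · filter_upwards [self_mem_nhdsWithin] with ε hε
      have : (ε:ℝ) ≠ 0 := ne_of_gt hε
      simp only [Set.mem_compl_iff, Set.mem_singleton_iff]
      intro h
      have : c * ε = 0 := by linarith [neg_eq_zero.1 h]
      rcases mul_eq_zero.1 this with h' | h'
      · exact hc h'
      · exact ‹(ε:ℝ) ≠ 0› h'
  have h := exp_slope.comp hmap
  have h2 : Tendsto (fun ε : ℝ => c * ((Real.exp (-(c*ε)) - 1) / (-(c*ε)))) (nhdsWithin 0 (Set.Ioi 0)) (nhds (c * 1)) :=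
    h.const_mul c
  rw [mul_one] at h2
  refine h2.congr' ?_
  filter_upwards [self_mem_nhdsWithin] with ε hε
  have hε0 : (ε:ℝ) ≠ 0 := ne_of_gt hε
  field_simp
  ring

lemma log_slope : Tendsto (fun x : ℝ => Real.log x / (x - 1)) (nhdsWithin 1 {(1:ℝ)}ᶜ) (nhds 1) := by
  have h := Real.hasDerivAt_log (one_ne_zero)
  rw [hasDerivAt_iff_tendsto_slope] at h
  simp only [inv_one] at h
  refine h.congr fun y => ?_
  rw [slope_def_field, Real.log_one]
  simp

lemma sqrt_eps_lim : Tendsto (fun ε : ℝ => Real.sqrt ε) (nhdsWithin 0 (Set.Ioi 0)) (nhds 0) := by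
  have := (Real.continuous_sqrt.tendsto 0).mono_left (nhdsWithin_le_nhds (s := Set.Ioi (0:ℝ)))
  simpa using this

lemma P_lim : Tendsto (fun ε : ℝ => (chi ε - 1) / Real.sqrt ε) (nhdsWithin 0 (Set.Ioi 0))
    (nhds (Real.sqrt 2)) := by
  have hu : Tendsto (fun ε : ℝ => Real.sqrt (1 - Real.exp (-ε) ^ 2) / Real.sqrt ε)
      (nhdsWithin 0 (Set.Ioi 0)) (nhds (Real.sqrt 2)) := by
    have h2 := one_sub_exp_lim 2 two_ne_zero
    have hsq : Tendsto (fun ε : ℝ => Real.sqrt ((1 - Real.exp (-(2*ε))) / ε))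
        (nhdsWithin 0 (Set.Ioi 0)) (nhds (Real.sqrt 2)) :=
      (Real.continuous_sqrt.tendsto 2).comp h2
    refine hsq.congr' ?_
    filter_upwards [self_mem_nhdsWithin] with ε hε
    rw [Real.sqrt_div' _ (le_of_lt hε)]
    have hh : Real.exp (-(2*ε)) = Real.exp (-ε) ^ 2 := by
      rw [← Real.exp_nat_mul]
      congr 1
      push_cast
      ring
    rw [hh]
  have hrem : Tendsto (fun ε : ℝ => (1 - Real.exp (-ε)) / Real.sqrt ε)
      (nhdsWithin 0 (Set.Ioi 0)) (nhds 0) := by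
    have h1 := one_sub_exp_lim 1 one_ne_zero
    have h1' : Tendsto (fun ε : ℝ => (1 - Real.exp (-ε)) / ε) (nhdsWithin 0 (Set.Ioi 0))
        (nhds 1) := by
      refine h1.congr fun ε => by norm_num
    have := h1'.mul sqrt_eps_lim
    rw [mul_zero] at this
    refine this.congr' ?_
    filter_upwards [self_mem_nhdsWithin] with ε hε
    have hε0 : (0:ℝ) < ε := hε
    have hsε : Real.sqrt ε ≠ 0 := ne_of_gt (Real.sqrt_pos.2 hε0)
    rw [div_mul_eq_mul_div, div_eq_div_iff (ne_of_gt hε0) hsε, mul_assoc,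
      Real.mul_self_sqrt hε0.le]
  have hs : Tendsto (fun ε : ℝ => Real.exp (-ε)) (nhdsWithin 0 (Set.Ioi 0)) (nhds 1) := by
    have : Tendsto (fun ε : ℝ => Real.exp (-ε)) (nhds 0) (nhds (Real.exp (-0))) :=
      (Real.continuous_exp.comp continuous_neg).tendsto 0
    simpa using this.mono_left nhdsWithin_le_nhds
  have hmain := ((hu.add hrem).div hs one_ne_zero)
  have : (Real.sqrt 2 + 0) / 1 = Real.sqrt 2 := by norm_num
  rw [this] at hmain
  refine hmain.congr' ?_
  filter_upwards [self_mem_nhdsWithin] with ε hε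
  have hε0 : (0:ℝ) < ε := hε
  have hs0 : (0:ℝ) < Real.exp (-ε) := Real.exp_pos _
  rw [chi]
  simp only [Pi.div_apply]
  field_simp
  ring

lemma chi_lim : Tendsto chi (nhdsWithin 0 (Set.Ioi 0)) (nhds 1) := by
  have h := P_lim.mul sqrt_eps_lim
  rw [mul_zero] at h
  have h2 : Tendsto (fun ε : ℝ => (chi ε - 1) / Real.sqrt ε * Real.sqrt ε + 1)
      (nhdsWithin 0 (Set.Ioi 0)) (nhds (0 + 1)) := h.add tendsto_const_nhds
  rw [zero_add] at h2
  refine h2.congr' ?_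
  filter_upwards [self_mem_nhdsWithin] with ε hε
  have hsε : Real.sqrt ε ≠ 0 := ne_of_gt (Real.sqrt_pos.2 hε)
  field_simp
  ring

lemma R_lim : Tendsto (fun ε : ℝ => Real.log (chi ε) / Real.sqrt ε) (nhdsWithin 0 (Set.Ioi 0))
    (nhds (Real.sqrt 2)) := by
  have hmap : Tendsto chi (nhdsWithin 0 (Set.Ioi 0)) (nhdsWithin 1 {(1:ℝ)}ᶜ) := by
    rw [tendsto_nhdsWithin_iff]
    refine ⟨chi_lim, ?_⟩
    filter_upwards [self_mem_nhdsWithin] with ε hε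
    exact ne_of_gt (chi_facts hε).1
  have h1 := log_slope.comp hmap
  have h2 := h1.mul P_lim
  rw [one_mul] at h2
  refine h2.congr' ?_
  filter_upwards [self_mem_nhdsWithin] with ε hε
  have hχ1 : 1 < chi ε := (chi_facts hε).1
  have hsε : Real.sqrt ε ≠ 0 := ne_of_gt (Real.sqrt_pos.2 hε)
  simp only [Function.comp_apply]
  have h1ne : chi ε - 1 ≠ 0 := ne_of_gt (by linarith)
  rw [div_mul_div_comm, mul_comm (Real.log (chi ε)) (chi ε - 1), mul_div_mul_left _ _ h1ne]

/-- Regular variation with index `(1+α)/2` of `Γ(ε) = Σ_{N≥1} N^{-1-α} F(N,ε)`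
for the undrifted comb model:
`ε^{-(1+α)/2} Σ_{N=1}^∞ N^{-1-α} F(N,ε) → 2^{(1+α)/2} ∫₀^∞ y^{-1-α} tanh y dy`,
the latter integral being finite.  (The `N = 0` term of the `tsum` vanishes
since `(0:ℝ)^{-1-α} = 0`.) -/
theorem stmt_12 (α : ℝ) (hα : α ∈ Set.Ioo (0:ℝ) 1) :
    IntegrableOn (fun y : ℝ => y ^ (-1 - α) * Real.tanh y) (Set.Ioi 0) volume ∧
      Tendsto (fun ε : ℝ =>
          ε ^ (-(1 + α) / 2) * ∑' N : ℕ, (N : ℝ) ^ (-1 - α) * combF N ε)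
        (nhdsWithin 0 (Set.Ioi 0))
        (nhds ((2:ℝ) ^ ((1 + α) / 2) *
          ∫ y in Set.Ioi (0:ℝ), y ^ (-1 - α) * Real.tanh y)) := by
  obtain ⟨hα0, hα1⟩ := hα
  refine ⟨my_int α ⟨hα0, hα1⟩, ?_⟩
  set l := nhdsWithin (0:ℝ) (Set.Ioi 0) with hl
  have hCsum : Summable (fun N : ℕ => (N:ℝ) ^ (-1-α)) :=
    Real.summable_nat_rpow.2 (by linarith)
  set C : ℝ := ∑' N : ℕ, (N:ℝ) ^ (-1-α) with hC
  set I : ℝ := ∫ y in Set.Ioi (0:ℝ), phi α y with hI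
  set b : ℝ → ℝ := fun ε => Real.log (chi ε) with hbdef
  set S : ℝ → ℝ := fun t => ∑' N : ℕ, t * phi α ((N:ℝ) * t) with hSdef
  set Q : ℝ → ℝ := fun ε => ∑' N : ℕ, (N:ℝ) ^ (-1-α) * (1 / ((chi ε) ^ (2*N) + 1)) with hQdef
  set A : ℝ → ℝ := fun ε => (chi ε - 1) / chi ε * (b ε) ^ α * ε ^ (-(1+α)/2) with hAdef
  set Er : ℝ → ℝ := fun ε => (chi ε - 1) ^ 2 / chi ε * ε ^ (-(1+α)/2) * Q ε with hErdef
  -- b tends to 0 within Ioi 0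
  have hb_pos : ∀ ε : ℝ, 0 < ε → 0 < b ε := fun ε hε => Real.log_pos (chi_facts hε).1
  have hb_tendsto : Tendsto b l (nhdsWithin 0 (Set.Ioi 0)) := by
    rw [tendsto_nhdsWithin_iff]
    constructor
    · have hlog : ContinuousAt Real.log 1 := Real.continuousAt_log one_ne_zero
      have := hlog.tendsto.comp chi_lim
      rwa [Real.log_one] at this
    · filter_upwards [self_mem_nhdsWithin] with ε hε
      exact hb_pos ε hε
  -- summability facts for ε > 0
  have hsummT : ∀ ε : ℝ, 0 < ε →
      Summable (fun N : ℕ => (N:ℝ) ^ (-1-α) * Real.tanh ((N:ℝ) * b ε)) := by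
    intro ε hε
    refine Summable.of_nonneg_of_le (fun N => ?_) (fun N => ?_) hCsum
    · exact mul_nonneg (Real.rpow_nonneg (Nat.cast_nonneg N) _)
        (my_tanh_nonneg (mul_nonneg (Nat.cast_nonneg N) (hb_pos ε hε).le))
    · calc (N:ℝ) ^ (-1-α) * Real.tanh ((N:ℝ) * b ε) ≤ (N:ℝ) ^ (-1-α) * 1 :=
          mul_le_mul_of_nonneg_left (my_tanh_lt_one _).le
            (Real.rpow_nonneg (Nat.cast_nonneg N) _)
        _ = (N:ℝ) ^ (-1-α) := mul_one _
  have hsummQ : ∀ ε : ℝ, 0 < ε →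
      Summable (fun N : ℕ => (N:ℝ) ^ (-1-α) * (1 / ((chi ε) ^ (2*N) + 1))) := by
    intro ε hε
    have hχ0 : (0:ℝ) < chi ε := lt_trans one_pos (chi_facts hε).1
    refine Summable.of_nonneg_of_le (fun N => ?_) (fun N => ?_) hCsum
    · positivity
    · have h1 : (1:ℝ) / ((chi ε) ^ (2*N) + 1) ≤ 1 := by
        rw [div_le_one (by positivity)]
        nlinarith [pow_pos hχ0 (2*N)]
      calc (N:ℝ) ^ (-1-α) * (1 / ((chi ε) ^ (2*N) + 1)) ≤ (N:ℝ) ^ (-1-α) * 1 :=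
          mul_le_mul_of_nonneg_left h1 (Real.rpow_nonneg (Nat.cast_nonneg N) _)
        _ = (N:ℝ) ^ (-1-α) := mul_one _
  -- Q bounds
  have hQ_nonneg : ∀ ε : ℝ, 0 < ε → 0 ≤ Q ε := by
    intro ε hε
    have hχ0 : (0:ℝ) < chi ε := lt_trans one_pos (chi_facts hε).1
    exact tsum_nonneg fun N => by positivity
  have hQ_le : ∀ ε : ℝ, 0 < ε → Q ε ≤ C := by
    intro ε hε
    have hχ0 : (0:ℝ) < chi ε := lt_trans one_pos (chi_facts hε).1
    refine Summable.tsum_le_tsum (fun N => ?_) (hsummQ ε hε) hCsum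
    have h1 : (1:ℝ) / ((chi ε) ^ (2*N) + 1) ≤ 1 := by
      rw [div_le_one (by positivity)]
      nlinarith [pow_pos hχ0 (2*N)]
    calc (N:ℝ) ^ (-1-α) * (1 / ((chi ε) ^ (2*N) + 1)) ≤ (N:ℝ) ^ (-1-α) * 1 :=
        mul_le_mul_of_nonneg_left h1 (Real.rpow_nonneg (Nat.cast_nonneg N) _)
      _ = (N:ℝ) ^ (-1-α) := mul_one _
  -- main pointwise identity on the filter
  have hG : ∀ ε : ℝ, 0 < ε →
      ε ^ (-(1 + α) / 2) * ∑' N : ℕ, (N : ℝ) ^ (-1 - α) * combF N ε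
        = A ε * S (b ε) - Er ε := by
    intro ε hε
    have hχ1 : 1 < chi ε := (chi_facts hε).1
    have hχ0 : (0:ℝ) < chi ε := lt_trans one_pos hχ1
    have hbε : 0 < b ε := hb_pos ε hε
    have hptwise : ∀ N : ℕ, (N : ℝ) ^ (-1 - α) * combF N ε
        = (chi ε - 1) / chi ε * ((N:ℝ) ^ (-1-α) * Real.tanh ((N:ℝ) * b ε))
          - (chi ε - 1) ^ 2 / chi ε * ((N:ℝ) ^ (-1-α) * (1 / ((chi ε) ^ (2*N) + 1))) := by
      intro N
      rcases Nat.eq_zero_or_pos N with h | h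
      · subst h
        simp [Real.zero_rpow (show -1 - α ≠ 0 by linarith)]
      · rw [combF_eq hε h]
        ring
    have hT_eq : (∑' N : ℕ, (N:ℝ) ^ (-1-α) * Real.tanh ((N:ℝ) * b ε))
        = (b ε) ^ α * S (b ε) := by
      simp only [hSdef]
      rw [← tsum_mul_left]
      refine tsum_congr fun N => ?_
      rcases Nat.eq_zero_or_pos N with h | h
      · subst h
        simp [Real.zero_rpow (show -1 - α ≠ 0 by linarith), phi]
      · have hN0 : (0:ℝ) < N := by exact_mod_cast h
        simp only [phi]
        rw [Real.mul_rpow (le_of_lt hN0) hbε.le]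
        have hb1 : (b ε) ^ α * ((b ε) * ((b ε) ^ (-1-α))) = 1 := by
          rw [show (b ε) * ((b ε) ^ (-1-α)) = (b ε) ^ (1 + (-1-α)) by
            rw [Real.rpow_add hbε, Real.rpow_one]]
          rw [← Real.rpow_add hbε, show α + (1 + (-1-α)) = (0:ℝ) by ring, Real.rpow_zero]
        calc (N:ℝ) ^ (-1-α) * Real.tanh ((N:ℝ) * b ε)
            = ((b ε) ^ α * ((b ε) * ((b ε) ^ (-1-α)))) * ((N:ℝ) ^ (-1-α) * Real.tanh ((N:ℝ) * b ε)) := by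
              rw [hb1, one_mul]
          _ = (b ε) ^ α * ((b ε) * ((N:ℝ) ^ (-1-α) * (b ε) ^ (-1-α) * Real.tanh ((N:ℝ) * b ε))) := by
              ring
    have htsum : (∑' N : ℕ, (N : ℝ) ^ (-1 - α) * combF N ε)
        = (chi ε - 1) / chi ε * ((b ε) ^ α * S (b ε)) - (chi ε - 1) ^ 2 / chi ε * Q ε := by
      rw [tsum_congr hptwise, Summable.tsum_sub ((hsummT ε hε).mul_left _) ((hsummQ ε hε).mul_left _),
        tsum_mul_left, tsum_mul_left, hT_eq]
    rw [htsum]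
    simp only [hAdef, hErdef]
    ring
  -- limit of A
  have hA : Tendsto A l (nhds ((2:ℝ) ^ ((1 + α) / 2))) := by
    have hsqrt2 : (0:ℝ) < Real.sqrt 2 := Real.sqrt_pos.2 two_pos
    have hRα : Tendsto (fun ε : ℝ => (Real.log (chi ε) / Real.sqrt ε) ^ α) l
        (nhds ((Real.sqrt 2) ^ α)) :=
      ((Real.continuousAt_rpow_const _ α (Or.inl hsqrt2.ne')).tendsto).comp R_lim
    have hinv : Tendsto (fun ε : ℝ => (chi ε)⁻¹) l (nhds 1) := by
      have := chi_lim.inv₀ one_ne_zero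
      rwa [inv_one] at this
    have hprod := (P_lim.mul hRα).mul hinv
    rw [mul_one] at hprod
    have hval : Real.sqrt 2 * (Real.sqrt 2) ^ α = (2:ℝ) ^ ((1 + α) / 2) := by
      rw [Real.sqrt_eq_rpow, ← Real.rpow_mul (by norm_num : (0:ℝ) ≤ 2),
        ← Real.rpow_add two_pos]
      congr 1
      ring
    rw [hval] at hprod
    refine hprod.congr' ?_
    filter_upwards [self_mem_nhdsWithin] with ε hε
    have hε0 : (0:ℝ) < ε := hε
    have hχ1 : 1 < chi ε := (chi_facts hε0).1
    have hχ0 : (0:ℝ) < chi ε := lt_trans one_pos hχ1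
    have hbε : 0 < b ε := hb_pos ε hε0
    have hsε : (0:ℝ) < Real.sqrt ε := Real.sqrt_pos.2 hε0
    have hdiv : (Real.log (chi ε) / Real.sqrt ε) ^ α = (b ε) ^ α / (Real.sqrt ε) ^ α :=
      Real.div_rpow hbε.le hsε.le α  -- check
    have hsplit : ε ^ (-(1+α)/2) = ((Real.sqrt ε) * (Real.sqrt ε) ^ α)⁻¹ := by
      rw [Real.sqrt_eq_rpow, ← Real.rpow_mul hε0.le, ← Real.rpow_add hε0,
        ← Real.rpow_neg hε0.le]
      congr 1
      ring
    have hsεα : (0:ℝ) < (Real.sqrt ε) ^ α := Real.rpow_pos_of_pos hsε α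
    simp only [hAdef]
    rw [hsplit, hdiv]
    field_simp
  -- limit of Er
  have hEr : Tendsto Er l (nhds 0) := by
    have hP2 := P_lim.mul P_lim
    have hpow0 : Tendsto (fun ε : ℝ => ε ^ ((1-α)/2)) l (nhds 0) := by
      have hc : ContinuousAt (fun x : ℝ => x ^ ((1-α)/2)) 0 :=
        Real.continuousAt_rpow_const 0 ((1-α)/2) (Or.inr (by linarith))
      have := hc.tendsto.mono_left (nhdsWithin_le_nhds (s := Set.Ioi (0:ℝ)))
      rwa [Real.zero_rpow (ne_of_gt (by linarith : (0:ℝ) < (1-α)/2))] at this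
    have hbound := (hP2.mul hpow0).mul_const C
    rw [mul_zero, zero_mul] at hbound
    refine squeeze_zero' ?_ ?_ hbound
    · filter_upwards [self_mem_nhdsWithin] with ε hε
      have hε0 : (0:ℝ) < ε := hε
      have hχ0 : (0:ℝ) < chi ε := lt_trans one_pos (chi_facts hε0).1
      have := hQ_nonneg ε hε0
      simp only [hErdef]
      have h1 : (0:ℝ) ≤ ε ^ (-(1+α)/2) := Real.rpow_nonneg hε0.le _
      have h2 : (0:ℝ) ≤ (chi ε - 1) ^ 2 / chi ε := by positivity
      exact mul_nonneg (mul_nonneg h2 h1) this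
    · filter_upwards [self_mem_nhdsWithin] with ε hε
      have hε0 : (0:ℝ) < ε := hε
      have hχ1 : 1 < chi ε := (chi_facts hε0).1
      have hχ0 : (0:ℝ) < chi ε := lt_trans one_pos hχ1
      have hsε : (0:ℝ) < Real.sqrt ε := Real.sqrt_pos.2 hε0
      have hQle := hQ_le ε hε0
      have hQ0 := hQ_nonneg ε hε0
      have hre : (chi ε - 1) / Real.sqrt ε * ((chi ε - 1) / Real.sqrt ε) * ε ^ ((1-α)/2)
          = (chi ε - 1) ^ 2 * ε ^ (-(1+α)/2) := by
        rw [div_mul_div_comm, Real.mul_self_sqrt hε0.le]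
        rw [show ε ^ (-(1+α)/2) = ε⁻¹ * ε ^ ((1-α)/2) by
          rw [show -(1+α)/2 = (-1 : ℝ) + (1-α)/2 by ring, Real.rpow_add hε0,
            Real.rpow_neg_one]]
        field_simp
      simp only [hErdef]
      have hr0 : (0:ℝ) ≤ ε ^ (-(1+α)/2) := Real.rpow_nonneg hε0.le _
      calc (chi ε - 1) ^ 2 / chi ε * ε ^ (-(1+α)/2) * Q ε
          ≤ (chi ε - 1) ^ 2 * ε ^ (-(1+α)/2) * C := by
            have h1 : (chi ε - 1) ^ 2 / chi ε ≤ (chi ε - 1) ^ 2 := by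
              rw [div_le_iff₀ hχ0]
              nlinarith [sq_nonneg (chi ε - 1)]
            have h2 : (chi ε - 1) ^ 2 / chi ε * ε ^ (-(1+α)/2) * Q ε
                ≤ (chi ε - 1) ^ 2 * ε ^ (-(1+α)/2) * Q ε := by
              gcongr
            refine le_trans h2 ?_
            gcongr
        _ = (chi ε - 1) / Real.sqrt ε * ((chi ε - 1) / Real.sqrt ε) * ε ^ ((1-α)/2) * C := by
            rw [hre]
  -- assemble
  have hS := (my_riemann ⟨hα0, hα1⟩).comp hb_tendsto
  have hfinal := (hA.mul hS).sub hEr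
  rw [sub_zero] at hfinal
  refine hfinal.congr' ?_
  filter_upwards [self_mem_nhdsWithin] with ε hε
  exact (hG ε hε).symm
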